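/- Let I be a linearly ordered set and let 𝓕 = {f_i : i ∈ I} be a family of units of R. Assume: (a) every a ∈ A with a ≠ 0 dominates every element of the form b·f_i^{-1} with b ∈ A and i ∈ I; (b) whenever i > j in I, the element f_i·f_j^{-1} belongs to 𝓕. Then 𝓕 is free over A: for pairwise distinct indices i_1,…,i_m ∈ I and a_1,…,a_m ∈ A, if ∑_{j=1}^m a_j·f_{i_j} = 0 in R then a_1 = … = a_m = 0. -/

import Mathlib

open Filter

/-- `f` *dominates* `g` (with respect to the absolute values `v n`) if `f` vanishes at only
finitely many coordinates and `|g n|_n / |f n|_n → 0` as `n → ∞`. -/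
def Dominates {R : ℕ → Type*} [∀ n, CommRing (R n)]
    (v : ∀ n, AbsoluteValue (R n) ℝ) (f g : ∀ n, R n) : Prop :=
  {n : ℕ | f n = 0}.Finite ∧
    Tendsto (fun n => v n (g n) / v n (f n)) atTop (nhds 0)

/-- Let `I` be a linearly ordered set and `𝓕 = {f i : i ∈ I}` a family of units of
`R = ∏ n, R n`.  If every nonzero `a ∈ A` dominates every `b * (f i)⁻¹` with `b ∈ A`, and
`f i * (f j)⁻¹` belongs to the family whenever `i > j`, then `𝓕` is free over `A`: any
vanishing `A`-linear combination of pairwise distinct members of `𝓕` has all coefficients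
zero. -/
theorem free_over_of_dominates
    {R : ℕ → Type*} [∀ n, CommRing (R n)] [∀ n, IsDomain (R n)]
    (v : ∀ n, AbsoluteValue (R n) ℝ) (A : Subring (∀ n, R n))
    {I : Type*} [LinearOrder I] (f : I → (∀ n, R n)ˣ)
    (ha : ∀ a ∈ A, a ≠ (0 : ∀ n, R n) → ∀ b ∈ A, ∀ i : I,
      Dominates v a (b * (((f i)⁻¹ : (∀ n, R n)ˣ) : ∀ n, R n)))
    (hquot : ∀ i j : I, j < i → ∃ t : I, f i * (f j)⁻¹ = f t)
    (m : ℕ) (ι : Fin m → I) (hι : Function.Injective ι)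
    (a : Fin m → ∀ n, R n) (haA : ∀ j, a j ∈ A)
    (hsum : ∑ j, a j * ((f (ι j) : (∀ n, R n)ˣ) : ∀ n, R n) = 0) :
    ∀ j, a j = 0 := by
  classical
  by_contra hcon
  push_neg at hcon
  obtain ⟨j', hj'⟩ := hcon
  set S : Finset (Fin m) := Finset.univ.filter (fun j => a j ≠ 0) with hSdef
  have hS : S.Nonempty := ⟨j', by simp [hSdef, hj']⟩
  obtain ⟨j0, hj0S, hmax⟩ := S.exists_max_image ι hS
  have hj0 : a j0 ≠ 0 := by simpa [hSdef] using hj0S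
  set u := ((f (ι j0))⁻¹ : (∀ n, R n)ˣ) with hu
  set g : Fin m → (∀ n, R n) :=
    fun j => a j * ((f (ι j) * u : (∀ n, R n)ˣ) : ∀ n, R n) with hgdef
  have hsum2 : ∑ j, g j = 0 := by
    have := congrArg (fun x => x * ((u : (∀ n, R n)ˣ) : ∀ n, R n)) hsum
    simpa [Finset.sum_mul, mul_assoc, hgdef] using this
  have hgj0 : g j0 = a j0 := by
    simp [hgdef, hu]
  have heq : a j0 = -∑ j ∈ S.erase j0, g j := by
    have h1 : ∑ j ∈ S, g j = 0 := by
      rw [← hsum2]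
      apply Finset.sum_subset (Finset.subset_univ S)
      intro j _ hjS
      have haj : a j = 0 := by
        by_contra hne; exact hjS (by simp [hSdef, hne])
      simp [hgdef, haj]
    have h2 : g j0 + ∑ j ∈ S.erase j0, g j = 0 := by
      rwa [← Finset.add_sum_erase _ _ hj0S] at h1
    rw [← hgj0]
    exact eq_neg_of_add_eq_zero_left h2
  have hdom : ∀ j ∈ S.erase j0, Dominates v (a j0) (g j) := by
    intro j hj
    obtain ⟨hjne, hjS⟩ := Finset.mem_erase.mp hj
    have hlt : ι j < ι j0 := lt_of_le_of_ne (hmax j hjS) (fun h => hjne (hι h))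
    obtain ⟨t, ht⟩ := hquot (ι j0) (ι j) hlt
    have hft : f (ι j) * u = (f t)⁻¹ := by
      rw [← ht, hu, mul_inv_rev, inv_inv, mul_comm]
    have hd := ha (a j0) (haA j0) hj0 (a j) (haA j) t
    rw [hgdef]
    simpa [hft] using hd
  rcases (S.erase j0).eq_empty_or_nonempty with hE | hE
  · apply hj0
    rw [heq, hE]
    simp
  · obtain ⟨j1, hj1⟩ := hE
    have hfin := (hdom j1 hj1).1
    have htend : Tendsto (fun n => ∑ j ∈ S.erase j0, v n (g j n) / v n (a j0 n))
        atTop (nhds 0) := by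
      have := tendsto_finset_sum (S.erase j0) (fun j hj => (hdom j hj).2)
      simpa using this
    have hub : Tendsto (fun n => v n (a j0 n) / v n (a j0 n)) atTop (nhds 0) := by
      apply squeeze_zero' (Eventually.of_forall fun n => div_nonneg ((v n).nonneg _) ((v n).nonneg _))
        (Eventually.of_forall ?_) htend
      intro n
      rw [← Finset.sum_div]
      by_cases hz : v n (a j0 n) = 0
      · simp [hz]
      · have hpos : 0 < v n (a j0 n) :=
          lt_of_le_of_ne ((v n).nonneg _) (Ne.symm hz)
        have hb : v n (a j0 n) ≤ ∑ j ∈ S.erase j0, v n (g j n) := by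
          have h3 : a j0 n = -((∑ j ∈ S.erase j0, g j) n) := by rw [heq]; rfl
          rw [h3, (v n).map_neg, Finset.sum_apply]
          exact (v n).sum_le _ _
        gcongr
    have hev : (fun n => v n (a j0 n) / v n (a j0 n)) =ᶠ[atTop] fun _ => (1 : ℝ) := by
      have h1 : ∀ᶠ n in cofinite, n ∉ {n | a j0 n = 0} := hfin.eventually_cofinite_notMem
      rw [Nat.cofinite_eq_atTop] at h1
      filter_upwards [h1] with n hn
      exact div_self ((v n).ne_zero_iff.mpr hn)
    have : (0 : ℝ) = 1 := tendsto_nhds_unique (hub.congr' hev) tendsto_const_nhds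
    exact zero_ne_one this
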